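/- arXiv:1109.5761 — 7 statements merged into one kernel-verified Lean document; each statement's English description precedes it below -/
import Mathlib

section
/- Let G be a finite group of characteristic p (i.e., C_G(O_p(G)) ≤ O_p(G)). If P is a p-subgroup of G and H is a subgroup with P·C_G(P) ≤ H ≤ N_G(P), then H has characteristic p, i.e., C_H(O_p(H)) ≤ O_p(H). -/
open Subgroup

noncomputable section

/-- The `p`-core `O_p(G)`: the largest normal `p`-subgroup of `G`
(defined as the join of all normal `p`-subgroups). -/
def pCore (p : ℕ) (G : Type*) [Group G] : Subgroup G :=
  ⨆ P ∈ {P : Subgroup G | P.Normal ∧ IsPGroup p ↥P}, P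

/-- A group has characteristic `p` if `C_G(O_p(G)) ≤ O_p(G)`. -/
def CharacteristicP (p : ℕ) (G : Type*) [Group G] : Prop :=
  Subgroup.centralizer ((pCore p G : Subgroup G) : Set G) ≤ pCore p G

/-- `G` has local characteristic `p` if the normalizer of every nontrivial
`p`-subgroup has characteristic `p`. -/
def LocalCharacteristicP (p : ℕ) (G : Type*) [Group G] : Prop :=
  ∀ Q : Subgroup G, Q ≠ ⊥ → IsPGroup p ↥Q → CharacteristicP p ↥(Subgroup.normalizer (Q : Set G))

/-- `G` has parabolic characteristic `p` if every `p`-local subgroup containing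
a Sylow `p`-subgroup has characteristic `p`. -/
def ParabolicCharacteristicP (p : ℕ) (G : Type*) [Group G] : Prop :=
  ∀ Q : Subgroup G, Q ≠ ⊥ → IsPGroup p ↥Q →
    (∃ S : Sylow p G, (S : Subgroup G) ≤ Subgroup.normalizer (Q : Set G)) → CharacteristicP p ↥(Subgroup.normalizer (Q : Set G))

/-- A `p`-subgroup `R` is `p`-radical if `R = O_p(N_G(R))`. -/
def IsRadicalPSubgroup (p : ℕ) {G : Type*} [Group G] (R : Subgroup G) : Prop :=
  IsPGroup p ↥R ∧ (pCore p ↥(Subgroup.normalizer (R : Set G))).map (Subgroup.normalizer (R : Set G)).subtype = R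

/-- A `p`-subgroup `R` is `p`-centric if `Z(R) = R ⊓ C_G(R)` is a Sylow `p`-subgroup
of `C_G(R)` (equivalently, in a finite group, a maximal `p`-subgroup of `C_G(R)`). -/
def IsPCentric (p : ℕ) {G : Type*} [Group G] (R : Subgroup G) : Prop :=
  IsPGroup p ↥R ∧
    IsPGroup p ↥(R ⊓ Subgroup.centralizer (R : Set G)) ∧
    ∀ Q : Subgroup G, Q ≤ Subgroup.centralizer (R : Set G) → IsPGroup p ↥Q →
      R ⊓ Subgroup.centralizer (R : Set G) ≤ Q → Q = R ⊓ Subgroup.centralizer (R : Set G)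

/-- An element of order `p` is `p`-central if it lies in the center of some
Sylow `p`-subgroup of `G`. -/
def IsPCentralElement (p : ℕ) {G : Type*} [Group G] (x : G) : Prop :=
  orderOf x = p ∧ ∃ S : Sylow p G, x ∈ (S : Subgroup G) ∧ ∀ y ∈ (S : Subgroup G), x * y = y * x

/-- A `p`-subgroup is purely noncentral if it contains no `p`-central element of `G`. -/
def PurelyNoncentral (p : ℕ) {G : Type*} [Group G] (P : Subgroup G) : Prop :=
  ∀ x ∈ P, ¬ IsPCentralElement p x

/-- Conjugation action of `g` on the group algebra. -/
def conjA {k : Type*} [Semiring k] {G : Type*} [Group G] (g : G) (x : MonoidAlgebra k G) :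
    MonoidAlgebra k G :=
  MonoidAlgebra.single g 1 * x * MonoidAlgebra.single g⁻¹ 1

/-- The relative trace map `Tr_H^G` on the group algebra (summing conjugates over
a set of coset representatives of `H`). -/
def relTr {k : Type*} [Semiring k] {G : Type*} [Group G] (H : Subgroup G)
    (x : MonoidAlgebra k G) : MonoidAlgebra k G :=
  ∑ᶠ q : G ⧸ H, conjA (Quotient.out q) x

/-- A block (idempotent) of `kG`: a primitive central idempotent. -/
def IsBlockOf (k : Type*) [Semiring k] (G : Type*) [Group G] (e : MonoidAlgebra k G) : Prop :=
  e ≠ 0 ∧ e * e = e ∧ (∀ x, e * x = x * e) ∧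
    ∀ f g : MonoidAlgebra k G, (∀ x, f * x = x * f) → (∀ x, g * x = x * g) →
      f * f = f → g * g = g → f * g = 0 → f + g = e → f = 0 ∨ g = 0

/-- `D` is a defect group of the block `e`: `D` is a `p`-subgroup, minimal with the
property that `e` lies in the image of the relative trace map `Tr_D^G` on `D`-fixed points. -/
def IsDefectGroupOf (p : ℕ) (k : Type*) [Semiring k] (G : Type*) [Group G]
    (D : Subgroup G) (e : MonoidAlgebra k G) : Prop :=
  IsPGroup p ↥D ∧
    (∃ x, (∀ h ∈ D, conjA h x = x) ∧ relTr D x = e) ∧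
    ∀ Q : Subgroup G, Q ≤ D → (∃ x, (∀ h ∈ Q, conjA h x = x) ∧ relTr Q x = e) → Q = D

/-- The augmentation map on the group algebra; a block is principal iff its
augmentation is nonzero. -/
def augm {k : Type*} [Semiring k] {G : Type*} [Group G] (x : MonoidAlgebra k G) : k :=
  Finsupp.sum x.coeff fun _ a => a

/-- `E` is subnormal in `G`. -/
def SubnormalIn {G : Type*} [Group G] (E : Subgroup G) : Prop :=
  ∃ (n : ℕ) (f : ℕ → Subgroup G), f 0 = E ∧ f n = ⊤ ∧
    ∀ i < n, f i ≤ f (i + 1) ∧ ((f i).subgroupOf (f (i + 1))).Normal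

/-- A quasisimple group: perfect with simple central quotient. -/
def IsQuasisimpleGroup (H : Type*) [Group H] : Prop :=
  commutator H = ⊤ ∧ IsSimpleGroup (H ⧸ Subgroup.center H)

/-- A component of `G`: a subnormal quasisimple subgroup. -/
def IsComponentOf {G : Type*} [Group G] (E : Subgroup G) : Prop :=
  SubnormalIn E ∧ IsQuasisimpleGroup ↥E

/-- The Fitting subgroup: the join of all nilpotent normal subgroups. -/
def fittingSubgroup (G : Type*) [Group G] : Subgroup G :=
  ⨆ P ∈ {P : Subgroup G | P.Normal ∧ Group.IsNilpotent ↥P}, P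

/-- The generalized Fitting subgroup `F*(G) = F(G)E(G)`. -/
def generalizedFitting (G : Type*) [Group G] : Subgroup G :=
  fittingSubgroup G ⊔ ⨆ E ∈ {E : Subgroup G | IsComponentOf E}, E


section AuxLemmas

variable {G : Type*} [Group G] {p : ℕ}

theorem le_pCore {N : Subgroup G} (h1 : N.Normal) (h2 : IsPGroup p ↥N) : N ≤ pCore p G :=
  le_iSup₂ (f := fun (P : Subgroup G) (_ : P ∈ {P : Subgroup G | P.Normal ∧ IsPGroup p ↥P}) => P)
    N ⟨h1, h2⟩

theorem pCore_normal : (pCore p G).Normal := by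
  constructor
  intro n hn g
  rw [pCore, iSup_subtype'] at hn
  refine Subgroup.iSup_induction _ (C := fun m => g * m * g⁻¹ ∈ pCore p G) hn
    (fun i x hx => ?_) (by simpa using (pCore p G).one_mem) (fun x y hx hy => ?_)
  · exact le_pCore i.2.1 i.2.2 (i.2.1.conj_mem x hx g)
  · show g * (x * y) * g⁻¹ ∈ pCore p G
    have : g * (x * y) * g⁻¹ = (g * x * g⁻¹) * (g * y * g⁻¹) := by group
    rw [this]; exact mul_mem hx hy

theorem isPGroup_pCore [Finite G] [Fact p.Prime] : IsPGroup p ↥(pCore p G) := by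
  haveI : Finite (Subgroup G) := Finite.of_injective (fun K => (K : Set G)) SetLike.coe_injective
  have key : ∀ t : Set (Subgroup G), t.Finite →
      (∀ P ∈ t, P.Normal ∧ IsPGroup p ↥P) → (sSup t).Normal ∧ IsPGroup p ↥(sSup t) := by
    intro t ht
    refine Set.Finite.induction_on (motive := fun (t : Set (Subgroup G)) _ => (∀ P ∈ t, P.Normal ∧ IsPGroup p (P : Subgroup G)) →
      (sSup t).Normal ∧ IsPGroup p ((sSup t : Subgroup G))) t ht (fun _ => ?_) ?_
    · rw [sSup_empty]
      exact ⟨inferInstance, IsPGroup.of_bot⟩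
    · intro a s ha hs ih hmem
      obtain ⟨hsn, hsp⟩ := ih (fun P hP => hmem P (Set.mem_insert_of_mem _ hP))
      obtain ⟨han, hap⟩ := hmem a (Set.mem_insert _ _)
      rw [sSup_insert]
      haveI := hsn
      haveI := han
      exact ⟨Subgroup.sup_normal a (sSup s), hap.to_sup_of_normal_right hsp⟩
  have h := key {P : Subgroup G | P.Normal ∧ IsPGroup p ↥P} (Set.toFinite _) (fun P hP => hP)
  have heq : pCore p G = sSup {P : Subgroup G | P.Normal ∧ IsPGroup p ↥P} := by
    rw [sSup_eq_iSup]; rfl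
  rw [heq]
  exact h.2

theorem centralizer_normal' {Q : Subgroup G} (hQ : Q.Normal) :
    (Subgroup.centralizer (Q : Set G)).Normal := by
  constructor
  intro c hc g
  rw [Subgroup.mem_centralizer_iff] at hc ⊢
  intro m hm
  have h1 : g⁻¹ * m * g ∈ Q := by
    have := hQ.conj_mem m hm g⁻¹
    simpa using this
  have h2 := hc _ h1
  have h3 := congrArg (fun z => g * z * g⁻¹) h2
  simpa [mul_assoc] using h3

open scoped commutatorElement in
theorem crux {G : Type*} [Group G] [Finite G] {p : ℕ} [Fact p.Prime]
    {P R : Subgroup G} (hP : IsPGroup p ↥P) (hR : IsPGroup p ↥R) (hRN : R.Normal) (y : G)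
    (hy : ¬ p ∣ orderOf y) (hyP : ∀ b ∈ P, b * y = y * b)
    (hyC : ∀ g ∈ R ⊓ Subgroup.centralizer (P : Set G), g * y = y * g) :
    ∀ r ∈ R, r * y = y * r := by
  by_contra hcon
  push_neg at hcon
  obtain ⟨r0, hr0R, hr0⟩ := hcon
  set R₁ : Subgroup G := R ⊓ Subgroup.centralizer {y} with hR₁def
  have hmemR₁ : ∀ g, g ∈ R₁ ↔ g ∈ R ∧ Commute y g := by
    intro g
    rw [hR₁def, Subgroup.mem_inf, Subgroup.mem_centralizer_iff]
    constructor
    · rintro ⟨h1, h2⟩; exact ⟨h1, h2 y rfl⟩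
    · rintro ⟨h1, h2⟩; exact ⟨h1, fun m hm => by rwa [Set.mem_singleton_iff.mp hm]⟩
  have hR₁R : R₁ ≤ R := inf_le_left
  have hPy : ∀ b ∈ P, Commute y b := fun b hb => (hyP b hb).symm
  -- P normalizes R₁
  have hPconj : ∀ b ∈ P, ∀ g ∈ R₁, b * g * b⁻¹ ∈ R₁ := by
    intro b hb g hg
    rw [hmemR₁] at hg ⊢
    exact ⟨hRN.conj_mem g hg.1 b, mul_assoc b g b⁻¹ ▸ (hPy b hb).mul_right (hg.2.mul_right (hPy b hb).inv_right)⟩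
  have hPnorm : ∀ b ∈ P, b ∈ Subgroup.normalizer (R₁ : Set G) := by
    intro b hb
    rw [Subgroup.mem_normalizer_iff]
    intro g
    constructor
    · exact hPconj b hb g
    · intro hg
      have := hPconj b⁻¹ (inv_mem hb) _ hg
      simpa [mul_assoc] using this
  -- x normalizes R₁, x ∉ R₁, via normalizer condition in the p-group R
  have hnil : Group.IsNilpotent ↥R := hR.isNilpotent
  have hcond := @normalizerCondition_of_isNilpotent ↥R _ hnil
  have hlt : R₁.subgroupOf R < ⊤ := by
    rw [lt_top_iff_ne_top]
    intro htop
    have h0 : (⟨r0, hr0R⟩ : ↥R) ∈ R₁.subgroupOf R := htop ▸ Subgroup.mem_top _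
    rw [Subgroup.mem_subgroupOf] at h0
    exact hr0 (((hmemR₁ r0).1 h0).2.symm)
  obtain ⟨x', hx'n, hx'0⟩ := SetLike.exists_of_lt (hcond (R₁.subgroupOf R) hlt)
  have hx'R₁ : (↑x' : G) ∉ R₁ := fun h => hx'0 (Subgroup.mem_subgroupOf.mpr h)
  have hx'norm : (↑x' : G) ∈ Subgroup.normalizer (R₁ : Set G) := by
    rw [Subgroup.mem_normalizer_iff]
    intro g
    constructor
    · intro hg
      have hgR : g ∈ R := hR₁R hg
      have h1 : (⟨g, hgR⟩ : ↥R) ∈ R₁.subgroupOf R := Subgroup.mem_subgroupOf.mpr hg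
      have h2 := (Subgroup.mem_normalizer_iff.mp hx'n ⟨g, hgR⟩).mp h1
      rw [Subgroup.mem_subgroupOf] at h2
      exact h2
    · intro hg
      have hgR : g ∈ R := by
        have h3 : (↑x')⁻¹ * (↑x' * g * (↑x')⁻¹) * ↑x' ∈ R :=
          mul_mem (mul_mem (inv_mem x'.2) (hR₁R hg)) x'.2
        simpa [mul_assoc] using h3
      have h1 : x' * ⟨g, hgR⟩ * x'⁻¹ ∈ R₁.subgroupOf R := by
        rw [Subgroup.mem_subgroupOf]
        exact hg
      have h2 := (Subgroup.mem_normalizer_iff.mp hx'n ⟨g, hgR⟩).mpr h1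
      rwa [Subgroup.mem_subgroupOf] at h2
  -- the subgroup N
  set N : Subgroup G := R ⊓ Subgroup.normalizer (R₁ : Set G) with hNdef
  have hNR : N ≤ R := inf_le_left
  have hR₁N : R₁ ≤ N := le_inf hR₁R Subgroup.le_normalizer
  have hxN : (↑x' : G) ∈ N := ⟨x'.2, hx'norm⟩
  have hSnotT : ¬ N ≤ R₁ := fun h => hx'R₁ (h hxN)
  -- the quotient N/R₁ with P acting by conjugation
  set S : Subgroup ↥N := R₁.subgroupOf N with hSdef
  haveI hSN : S.Normal := by
    constructor
    intro s hs n
    rw [hSdef, Subgroup.mem_subgroupOf] at hs ⊢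
    have hn2 : (↑n : G) ∈ Subgroup.normalizer (R₁ : Set G) := (Subgroup.mem_inf.mp n.2).2
    have := (Subgroup.mem_normalizer_iff.mp hn2 (↑s)).mp hs
    simpa using this
  have hPN : ∀ (b : ↥P) (n : ↥N), (↑b : G) * ↑n * (↑b)⁻¹ ∈ N := by
    intro b n
    refine Subgroup.mem_inf.mpr ⟨hRN.conj_mem _ (hNR n.2) _, ?_⟩
    exact mul_mem (mul_mem (hPnorm ↑b b.2) (Subgroup.mem_inf.mp n.2).2)
      (inv_mem (hPnorm ↑b b.2))
  have hresp : ∀ (b : ↥P) (n₁ n₂ : ↥N), @Setoid.r _ (QuotientGroup.leftRel S) n₁ n₂ →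
      @Setoid.r _ (QuotientGroup.leftRel S) (⟨(↑b : G) * ↑n₁ * (↑b)⁻¹, hPN b n₁⟩ : ↥N)
        (⟨(↑b : G) * ↑n₂ * (↑b)⁻¹, hPN b n₂⟩ : ↥N) := by
    intro b n₁ n₂ h
    rw [QuotientGroup.leftRel_apply] at h ⊢
    rw [hSdef, Subgroup.mem_subgroupOf] at h ⊢
    push_cast at h ⊢
    have e : (↑b : G) * ((↑n₁)⁻¹ * ↑n₂) * (↑b)⁻¹ =
        (((↑b : G) * ↑n₁ * (↑b)⁻¹)⁻¹ * ((↑b : G) * ↑n₂ * (↑b)⁻¹)) := by group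
    rw [← e]
    exact hPconj ↑b b.2 _ h
  let σ : ↥P → (↥N ⧸ S) → (↥N ⧸ S) := fun b =>
    Quotient.map' (s₁ := QuotientGroup.leftRel S) (s₂ := QuotientGroup.leftRel S)
      (fun n => (⟨(↑b : G) * ↑n * (↑b)⁻¹, hPN b n⟩ : ↥N)) (fun n₁ n₂ h => hresp b n₁ n₂ h)
  have hσmk : ∀ (b : ↥P) (n : ↥N),
      σ b (QuotientGroup.mk n) = QuotientGroup.mk (⟨(↑b : G) * ↑n * (↑b)⁻¹, hPN b n⟩ : ↥N) :=
    fun b n => rfl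
  letI act : MulAction ↥P (↥N ⧸ S) :=
    { smul := σ
      one_smul := fun v => by
        induction v using QuotientGroup.induction_on with
        | H n =>
          show σ 1 (QuotientGroup.mk n) = QuotientGroup.mk n
          rw [hσmk]
          congr 1
          ext
          simp
      mul_smul := fun a b v => by
        induction v using QuotientGroup.induction_on with
        | H n =>
          show σ (a * b) (QuotientGroup.mk n) = σ a (σ b (QuotientGroup.mk n))
          rw [hσmk, hσmk, hσmk]
          congr 1
          ext
          push_cast
          group }
  have hpV : p ∣ Nat.card (↥N ⧸ S) := by
    have hNp : IsPGroup p ↥N := hR.to_le hNR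
    obtain ⟨n, hn⟩ := IsPGroup.iff_card.mp hNp
    have hdvd : S.index ∣ p ^ n := hn ▸ Subgroup.index_dvd_card S
    obtain ⟨j, hjn, hej⟩ := (Nat.dvd_prime_pow Fact.out).mp hdvd
    have hne1 : S.index ≠ 1 := fun h =>
      hSnotT (Subgroup.subgroupOf_eq_top.mp (Subgroup.index_eq_one.mp h))
    have hj0 : j ≠ 0 := by rintro rfl; rw [pow_zero] at hej; exact hne1 hej
    have hfin : p ∣ S.index := by rw [hej]; exact dvd_pow_self p hj0
    exact hfin
  have h1fix : (QuotientGroup.mk (1 : ↥N) : ↥N ⧸ S) ∈ MulAction.fixedPoints ↥P (↥N ⧸ S) := by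
    intro b
    show σ b (QuotientGroup.mk 1) = QuotientGroup.mk 1
    rw [hσmk]
    congr 1
    ext
    simp
  obtain ⟨v, hvfix, hvne⟩ := hP.exists_fixed_point_of_prime_dvd_card_of_fixed_point (↥N ⧸ S) hpV h1fix
  revert hvfix hvne
  induction v using QuotientGroup.induction_on with
  | H xb =>
  intro hvfix hvne
  set x : G := ↑xb with hxdef
  have hxR : x ∈ R := hNR xb.2
  have hxnorm : x ∈ Subgroup.normalizer (R₁ : Set G) := (Subgroup.mem_inf.mp xb.2).2
  have hxR₁ : x ∉ R₁ := by
    intro hmem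
    apply hvne
    symm
    rw [QuotientGroup.eq]
    rw [hSdef, Subgroup.mem_subgroupOf]
    push_cast
    simpa using inv_mem hmem
  have hcomm : ∀ b ∈ P, b * x⁻¹ * b⁻¹ * x ∈ R₁ := by
    intro b hb
    have hfix := hvfix ⟨b, hb⟩
    have : σ ⟨b, hb⟩ (QuotientGroup.mk xb) = QuotientGroup.mk xb := hfix
    rw [hσmk, QuotientGroup.eq] at this
    rw [hSdef, Subgroup.mem_subgroupOf] at this
    push_cast at this
    have e : ((b : G) * x * b⁻¹)⁻¹ * x = (b * x⁻¹ * b⁻¹ * x : G) := by group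
    rwa [e] at this
  -- key commutator facts
  have hA : ∀ t ∈ P, t⁻¹ * x * t * x⁻¹ ∈ R₁ := by
    intro t ht
    have h1 := hcomm t⁻¹ (inv_mem ht)
    have h2 := (Subgroup.mem_normalizer_iff.mp hxnorm _).mp h1
    have h3 := inv_mem h2
    have e : (x * (t⁻¹ * x⁻¹ * t⁻¹⁻¹ * x) * x⁻¹)⁻¹ = t⁻¹ * x * t * x⁻¹ := by group
    rwa [e] at h3
  have hBt : ∀ t ∈ P, Commute (x⁻¹ * y * x * y⁻¹) t := by
    intro t ht
    have hAy : Commute y (t⁻¹ * x * t * x⁻¹) := ((hmemR₁ _).1 (hA t ht)).2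
    have hty : t * y = y * t := hyP t ht
    have hA1 : (t⁻¹ * x * t * x⁻¹)⁻¹ * y⁻¹ * (t⁻¹ * x * t * x⁻¹) * y = 1 := by
      rw [mul_assoc ((t⁻¹ * x * t * x⁻¹)⁻¹ * y⁻¹), ← hAy.eq]
      group
    have hC1 : y⁻¹ * t * y * t⁻¹ = 1 := by
      rw [mul_assoc y⁻¹ t y, hty]
      group
    have HW : (x⁻¹ * ((t⁻¹ * x * t * x⁻¹)⁻¹ * y⁻¹ * (t⁻¹ * x * t * x⁻¹) * y) * x) *
        (y⁻¹ * ((x⁻¹ * y * x * y⁻¹)⁻¹ * t⁻¹ * (x⁻¹ * y * x * y⁻¹) * t) * y) *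
        (t⁻¹ * ((y⁻¹ * t * y * t⁻¹)⁻¹ * x⁻¹ * (y⁻¹ * t * y * t⁻¹) * x) * t) = 1 := by
      group
    rw [hA1, hC1] at HW
    have hT2 : (x⁻¹ * y * x * y⁻¹)⁻¹ * t⁻¹ * (x⁻¹ * y * x * y⁻¹) * t = 1 := by
      have h5 : y⁻¹ * ((x⁻¹ * y * x * y⁻¹)⁻¹ * t⁻¹ * (x⁻¹ * y * x * y⁻¹) * t) * y = 1 := by
        have e : y⁻¹ * ((x⁻¹ * y * x * y⁻¹)⁻¹ * t⁻¹ * (x⁻¹ * y * x * y⁻¹) * t) * y =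
            (x⁻¹ * (1 : G) * x) *
            (y⁻¹ * ((x⁻¹ * y * x * y⁻¹)⁻¹ * t⁻¹ * (x⁻¹ * y * x * y⁻¹) * t) * y) *
            (t⁻¹ * ((1 : G)⁻¹ * x⁻¹ * 1 * x) * t) := by group
        rw [e, HW]
      have h7 := congrArg (fun z => y * z * y⁻¹) h5
      simpa [mul_assoc] using h7
    have h8 : ⁅(x⁻¹ * y * x * y⁻¹)⁻¹, t⁻¹⁆ = 1 := by
      rw [commutatorElement_def, inv_inv, inv_inv]
      exact hT2
    have h9 := commutatorElement_eq_one_iff_commute.mp h8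
    simpa using h9.inv_inv
  -- B := x⁻¹ * y * x * y⁻¹ lies in R and centralizes P, hence commutes with y
  have hBR : x⁻¹ * y * x * y⁻¹ ∈ R := by
    have e : x⁻¹ * y * x * y⁻¹ = x⁻¹ * (y * x * y⁻¹) := by group
    rw [e]
    exact mul_mem (inv_mem hxR) (hRN.conj_mem x hxR y)
  have hBP : x⁻¹ * y * x * y⁻¹ ∈ Subgroup.centralizer (P : Set G) := by
    rw [Subgroup.mem_centralizer_iff]
    intro m hm
    exact ((hBt m hm).symm).eq
  have hyB : Commute y (x⁻¹ * y * x * y⁻¹) :=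
    (hyC _ (Subgroup.mem_inf.mpr ⟨hBR, hBP⟩)).symm
  -- conjugation telescope : B ^ (orderOf y) = 1
  have hconj : x⁻¹ * y * x = (x⁻¹ * y * x * y⁻¹) * y := by group
  have hBm : (x⁻¹ * y * x * y⁻¹) ^ orderOf y = 1 := by
    have h1 : ((x⁻¹ * y * x * y⁻¹) * y) ^ orderOf y =
        (x⁻¹ * y * x * y⁻¹) ^ orderOf y * y ^ orderOf y := (hyB.symm).mul_pow _
    rw [← hconj] at h1
    have h2 : (x⁻¹ * y * x) ^ orderOf y = x⁻¹ * y ^ orderOf y * x := by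
      have e : x⁻¹ * y * x = x⁻¹ * y * x⁻¹⁻¹ := by rw [inv_inv]
      rw [e, conj_pow, inv_inv]
    rw [h2, pow_orderOf_eq_one] at h1
    simpa using h1.symm
  have hordB : orderOf (x⁻¹ * y * x * y⁻¹) ∣ orderOf y := orderOf_dvd_of_pow_eq_one hBm
  obtain ⟨k, hk⟩ := hR ⟨_, hBR⟩
  have hBpk : (x⁻¹ * y * x * y⁻¹) ^ (p ^ k) = 1 := by
    have h5 := congrArg (fun z : ↥R => (z : G)) hk
    push_cast at h5
    exact h5
  have hordB2 : orderOf (x⁻¹ * y * x * y⁻¹) ∣ p ^ k := orderOf_dvd_of_pow_eq_one hBpk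
  have hcop : Nat.Coprime (p ^ k) (orderOf y) :=
    Nat.Coprime.pow_left k ((Nat.Prime.coprime_iff_not_dvd Fact.out).mpr hy)
  have hB1 : x⁻¹ * y * x * y⁻¹ = 1 := by
    have hdg := Nat.dvd_gcd hordB2 hordB
    rw [Nat.Coprime] at hcop
    rw [hcop] at hdg
    exact orderOf_eq_one_iff.mp (Nat.dvd_one.mp hdg)
  apply hxR₁
  rw [hmemR₁]
  refine ⟨hxR, ?_⟩
  show y * x = x * y
  have h6 := congrArg (fun z => x * z * y) hB1
  simpa [mul_assoc] using h6

end AuxLemmas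

theorem stmt0 {G : Type*} [Group G] [Finite G] (p : ℕ) [Fact p.Prime]
    (hG : CharacteristicP p G) (P H : Subgroup G) (hP : IsPGroup p ↥P)
    (h1 : P ≤ H) (h2 : Subgroup.centralizer (P : Set G) ≤ H) (h3 : H ≤ Subgroup.normalizer (P : Set G)) :
    CharacteristicP p ↥H := by
  classical
  have hRN : (pCore p G).Normal := pCore_normal
  have hRp : IsPGroup p ↥(pCore p G) := isPGroup_pCore
  have hPsub : P.subgroupOf H ≤ pCore p ↥H := by
    refine le_pCore ?_ hP.comap_subtype
    constructor
    intro n hn g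
    rw [Subgroup.mem_subgroupOf] at hn ⊢
    push_cast
    exact (Subgroup.mem_normalizer_iff.mp (h3 g.2) _).mp hn
  have hRsub : (pCore p G).subgroupOf H ≤ pCore p ↥H := by
    refine le_pCore ?_ hRp.comap_subtype
    constructor
    intro n hn g
    rw [Subgroup.mem_subgroupOf] at hn ⊢
    push_cast
    exact hRN.conj_mem _ hn _
  have hCN : (Subgroup.centralizer ((pCore p ↥H : Subgroup ↥H) : Set ↥H)).Normal :=
    centralizer_normal' pCore_normal
  have hCp : IsPGroup p ↥(Subgroup.centralizer ((pCore p ↥H : Subgroup ↥H) : Set ↥H)) := by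
    intro g
    set c : ↥H := ↑g with hcdef
    have hcC : c ∈ Subgroup.centralizer ((pCore p ↥H : Subgroup ↥H) : Set ↥H) := g.2
    set n := orderOf c with hndef
    refine ⟨n.factorization p, ?_⟩
    suffices hc1 : c ^ p ^ n.factorization p = 1 by
      exact Subtype.ext (by push_cast; exact hc1)
    have hy'C : c ^ p ^ n.factorization p ∈
        Subgroup.centralizer ((pCore p ↥H : Subgroup ↥H) : Set ↥H) := pow_mem hcC _
    set y' : ↥H := c ^ p ^ n.factorization p with hy'def
    have hn0 : n ≠ 0 := by
      rw [hndef]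
      exact (orderOf_pos c).ne'
    have hyord : orderOf y' = n / p ^ n.factorization p := by
      rw [hy'def, orderOf_pow, ← hndef, Nat.gcd_eq_right (Nat.ordProj_dvd n p)]
    have hpy : ¬ p ∣ orderOf y' := by
      rw [hyord]
      exact Nat.not_dvd_ordCompl Fact.out hn0
    have hyordG : orderOf ((y' : ↥H) : G) = orderOf y' := by
      have := orderOf_injective H.subtype Subtype.coe_injective y'
      simpa using this
    have hcent : ∀ q : ↥H, q ∈ pCore p ↥H → (q : G) * ↑y' = ↑y' * q := by
      intro q hq
      have h4 := Subgroup.mem_centralizer_iff.mp hy'C q hq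
      exact_mod_cast congrArg Subtype.val h4
    have hyP : ∀ b ∈ P, b * ((y' : ↥H) : G) = ↑y' * b := by
      intro b hb
      have hbH : b ∈ H := h1 hb
      exact hcent ⟨b, hbH⟩ (hPsub (Subgroup.mem_subgroupOf.mpr hb))
    have hyC : ∀ w ∈ (pCore p G) ⊓ Subgroup.centralizer (P : Set G),
        w * ((y' : ↥H) : G) = ↑y' * w := by
      intro w hw
      obtain ⟨hw1, hw2⟩ := Subgroup.mem_inf.mp hw
      exact hcent ⟨w, h2 hw2⟩ (hRsub (Subgroup.mem_subgroupOf.mpr hw1))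
    have hcrux := crux hP hRp hRN ((y' : ↥H) : G) (by rw [hyordG]; exact hpy) hyP hyC
    have hyR : ((y' : ↥H) : G) ∈ pCore p G :=
      hG (Subgroup.mem_centralizer_iff.mpr (fun m hm => hcrux m hm))
    obtain ⟨j, hj⟩ := hRp ⟨((y' : ↥H) : G), hyR⟩
    have hyG1 : ((y' : ↥H) : G) ^ p ^ j = 1 := by
      have h5 := congrArg Subtype.val hj
      simpa using h5
    have hdvd : orderOf ((y' : ↥H) : G) ∣ p ^ j := orderOf_dvd_of_pow_eq_one hyG1
    have hcop : Nat.Coprime (orderOf ((y' : ↥H) : G)) p := by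
      rw [hyordG]
      exact Nat.coprime_comm.mp ((Nat.Prime.coprime_iff_not_dvd Fact.out).mpr hpy)
    have hord1 : orderOf ((y' : ↥H) : G) = 1 := Nat.Coprime.eq_one_of_dvd (hcop.pow_right j) hdvd
    have hy1 : ((y' : ↥H) : G) = 1 := orderOf_eq_one_iff.mp hord1
    have hy'1 : y' = 1 := Subtype.ext (by exact_mod_cast hy1)
    rw [hy'def] at hy'1
    exact hy'1
  exact le_pCore hCN hCp
end
end

section
/- Let G be a finite group and P a p-subgroup of G. Then C_G(P) has characteristic p if and only if N_G(P) has characteristic p. -/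
open Subgroup

noncomputable section

section MyAux

open Pointwise

variable {G : Type*} [Group G] {p : ℕ} [Fact p.Prime]

theorem myLe_pCore {G' : Type*} [Group G'] {P : Subgroup G'} (h1 : P.Normal)
    (h2 : IsPGroup p ↥P) : P ≤ pCore p G' :=
  le_iSup_of_le P (le_iSup_of_le ⟨h1, h2⟩ le_rfl)

theorem myPCore_normal (G' : Type*) [Group G'] : (pCore p G').Normal := by
  constructor
  intro x hx g
  have heq : pCore p G' = ⨆ P : {P : Subgroup G' | P.Normal ∧ IsPGroup p ↥P}, (P : Subgroup G') :=
    iSup_subtype'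
  have hx' : x ∈ ⨆ P : {P : Subgroup G' | P.Normal ∧ IsPGroup p ↥P}, (P : Subgroup G') :=
    heq ▸ hx
  refine Subgroup.iSup_induction (C := fun y => g * y * g⁻¹ ∈ pCore p G') _ hx' ?_ ?_ ?_
  · rintro ⟨P, hPn, hPp⟩ y hy
    exact myLe_pCore hPn hPp (hPn.conj_mem y hy g)
  · simpa using one_mem (pCore p G')
  · intro y z hy hz
    have h : g * (y * z) * g⁻¹ = (g * y * g⁻¹) * (g * z * g⁻¹) := by group
    rw [h]; exact mul_mem hy hz

theorem myPCore_isPGroup (G' : Type*) [Group G'] [Finite G'] : IsPGroup p ↥(pCore p G') := by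
  obtain ⟨S⟩ := (inferInstance : Nonempty (Sylow p G'))
  refine IsPGroup.to_le S.2 ?_
  refine iSup_le fun P => iSup_le fun hP => ?_
  obtain ⟨T, hT⟩ := hP.2.exists_le_sylow
  obtain ⟨g, rfl⟩ := MulAction.exists_smul_eq G' T S
  haveI := hP.1
  calc P = MulAut.conj g • P := (Subgroup.Normal.conj_smul_eq_self g P).symm
    _ ≤ MulAut.conj g • (T : Subgroup G') := by
        rwa [Subgroup.pointwise_smul_le_pointwise_smul_iff]
    _ = ↑(g • T) := by rw [Sylow.smul_def, Sylow.pointwise_smul_def]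

/-- `O_p(H)` viewed as a subgroup of the ambient group. -/
def opm (p : ℕ) {G : Type*} [Group G] (H : Subgroup G) : Subgroup G :=
  (pCore p ↥H).map H.subtype

theorem myOpm_le (H : Subgroup G) : opm p H ≤ H := Subgroup.map_subtype_le _

theorem myOpm_isPGroup [Finite G] (H : Subgroup G) : IsPGroup p ↥(opm p H) :=
  (myPCore_isPGroup ↥H).map _

theorem myOpm_conj (H : Subgroup G) {h r : G} (hh : h ∈ H) (hr : r ∈ opm p H) :
    h * r * h⁻¹ ∈ opm p H := by
  obtain ⟨y, hy, rfl⟩ := Subgroup.mem_map.mp hr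
  exact ⟨⟨h, hh⟩ * y * ⟨h, hh⟩⁻¹, (myPCore_normal ↥H).conj_mem y hy ⟨h, hh⟩, rfl⟩

theorem myLe_opm {H K : Subgroup G} (hKH : K ≤ H) (hK : IsPGroup p ↥K)
    (hconj : ∀ h ∈ H, ∀ k ∈ K, h * k * h⁻¹ ∈ K) : K ≤ opm p H := by
  have h1 : (K.subgroupOf H).Normal := by
    constructor
    rintro ⟨x, hxH⟩ hx ⟨g, hgH⟩
    simp only [Subgroup.mem_subgroupOf] at hx ⊢
    exact hconj g hgH x hx
  have h2 : IsPGroup p ↥(K.subgroupOf H) := hK.comap_subtype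
  intro k hk
  exact ⟨⟨k, hKH hk⟩, myLe_pCore h1 h2 (by simpa [Subgroup.mem_subgroupOf] using hk), rfl⟩

theorem myChar_iff (H : Subgroup G) :
    CharacteristicP p ↥H ↔ ∀ g ∈ H, (∀ r ∈ opm p H, r * g = g * r) → g ∈ opm p H := by
  constructor
  · intro hc g hg hcomm
    have hmem : (⟨g, hg⟩ : ↥H) ∈ Subgroup.centralizer ((pCore p ↥H : Subgroup ↥H) : Set ↥H) := by
      rw [Subgroup.mem_centralizer_iff]
      rintro ⟨r, hrH⟩ hr
      exact Subtype.ext (hcomm r ⟨⟨r, hrH⟩, hr, rfl⟩)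
    exact ⟨⟨g, hg⟩, hc hmem, rfl⟩
  · intro hc x hx
    rw [Subgroup.mem_centralizer_iff] at hx
    have hg : (↑x : G) ∈ opm p H := by
      refine hc x x.2 fun r hr => ?_
      obtain ⟨y, hy, rfl⟩ := Subgroup.mem_map.mp hr
      exact congrArg Subtype.val (hx y hy)
    obtain ⟨y, hy, hyx⟩ := Subgroup.mem_map.mp hg
    rwa [show y = x from Subtype.ext hyx] at hy

end MyAux

theorem stmt2 {G : Type*} [Group G] [Finite G] (p : ℕ) [Fact p.Prime]
    (P : Subgroup G) (hP : IsPGroup p ↥P) :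
    CharacteristicP p ↥(Subgroup.centralizer (P : Set G)) ↔ CharacteristicP p ↥(Subgroup.normalizer (P : Set G)) := by
  set C := Subgroup.centralizer (P : Set G) with hCdef
  set N := Subgroup.normalizer (P : Set G) with hNdef
  have hPN : P ≤ N := Subgroup.le_normalizer
  have keyC : ∀ c ∈ C, ∀ y ∈ P, c * y * c⁻¹ = y := by
    intro c hc y hy
    have h := Subgroup.mem_centralizer_iff.mp hc y hy
    rw [← h, mul_assoc, mul_inv_cancel, mul_one]
  have hCN : C ≤ N := by
    intro c hc
    rw [Subgroup.mem_normalizer_iff]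
    intro x
    constructor
    · intro hx; rw [keyC c hc x hx]; exact hx
    · intro hx
      have h := keyC c⁻¹ (inv_mem hc) _ hx
      have h2 : c⁻¹ * (c * x * c⁻¹) * c⁻¹⁻¹ = x := by group
      rw [h2] at h; rw [← h] at hx; exact hx
  have hCconj : ∀ n ∈ N, ∀ c ∈ C, n * c * n⁻¹ ∈ C := by
    intro n hn c hc
    rw [Subgroup.mem_centralizer_iff]
    intro x hx
    have h1 : n⁻¹ * x * n ∈ P := by
      have := (Subgroup.mem_normalizer_iff.mp (inv_mem hn) x).mp hx
      simpa using this
    have h2 := Subgroup.mem_centralizer_iff.mp hc _ h1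
    have h3 := congrArg (fun z => n * z * n⁻¹) h2
    simp only [mul_assoc, inv_mul_cancel_left, mul_inv_cancel_left] at h3 ⊢
    simpa [mul_assoc] using h3
  have hPQ : P ≤ opm p N :=
    myLe_opm hPN hP fun n hn k hk => (Subgroup.mem_normalizer_iff.mp hn k).mp hk
  have hQC_le_R : opm p N ⊓ C ≤ opm p C := by
    refine myLe_opm inf_le_right ((myOpm_isPGroup N).to_le inf_le_left) ?_
    intro c hc k hk
    rw [Subgroup.mem_inf] at hk ⊢
    exact ⟨myOpm_conj N (hCN hc) hk.1, C.mul_mem (C.mul_mem hc hk.2) (C.inv_mem hc)⟩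
  have hRconjN : ∀ n ∈ N, ∀ r ∈ opm p C, n * r * n⁻¹ ∈ opm p C := by
    intro n hn
    have hmap : (opm p C).map (MulAut.conj n).toMonoidHom ≤ opm p C := by
      refine myLe_opm ?_ ((myOpm_isPGroup C).map _) ?_
      · rintro x ⟨r, hr, rfl⟩
        exact hCconj n hn r (myOpm_le C hr)
      · rintro c hc x ⟨r, hr, rfl⟩
        refine ⟨(n⁻¹ * c * n) * r * (n⁻¹ * c * n)⁻¹, myOpm_conj C ?_ hr, ?_⟩
        · have := hCconj n⁻¹ (inv_mem hn) c hc
          simpa using this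
        · show MulAut.conj n _ = c * MulAut.conj n r * c⁻¹
          simp only [MulAut.conj_apply]
          group
    intro r hr
    exact hmap ⟨r, hr, rfl⟩
  have hRQ : opm p C ≤ opm p N :=
    myLe_opm ((myOpm_le C).trans hCN) (myOpm_isPGroup C) hRconjN
  rw [myChar_iff, myChar_iff]
  constructor
  · intro hc g hg hcomm
    have hgC : g ∈ C := Subgroup.mem_centralizer_iff.mpr fun x hx => hcomm x (hPQ hx)
    exact hRQ (hc g hgC fun r hr => hcomm r (hRQ hr))
  · intro hn g hgC hcomm
    set R := opm p C with hRdef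
    set Q := opm p N with hQdef
    set D := C ⊓ Subgroup.centralizer (R : Set G) with hDdef
    have hgD : g ∈ D := Subgroup.mem_inf.mpr ⟨hgC, Subgroup.mem_centralizer_iff.mpr hcomm⟩
    have hDconj : ∀ c ∈ C, ∀ d ∈ D, c * d * c⁻¹ ∈ D := by
      intro c hc d hd
      rw [Subgroup.mem_inf] at hd ⊢
      refine ⟨C.mul_mem (C.mul_mem hc hd.1) (C.inv_mem hc), ?_⟩
      rw [Subgroup.mem_centralizer_iff]
      intro r hr
      have hr' : c⁻¹ * r * c ∈ R := by
        have := myOpm_conj C (C.inv_mem hc) hr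
        simpa using this
      have h2 := Subgroup.mem_centralizer_iff.mp hd.2 _ hr'
      have h3 := congrArg (fun z => c * z * c⁻¹) h2
      simp only [mul_assoc, inv_mul_cancel_left, mul_inv_cancel_left] at h3 ⊢
      simpa [mul_assoc] using h3
    have hDp : IsPGroup p ↥D := by
      rintro ⟨d, hdD⟩
      obtain ⟨hdC, hdCen⟩ := Subgroup.mem_inf.mp hdD
      have hord : orderOf d ≠ 0 := (orderOf_pos d).ne'
      set n := orderOf d with hndef
      set a := n.factorization p with hadef
      set m := n / p ^ a with hmdef
      have hdvd : p ^ a ∣ n := Nat.ordProj_dvd n p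
      have hm : Nat.Coprime p m := Nat.coprime_ordCompl Fact.out hord
      set y := d ^ p ^ a with hydef
      have hyord : orderOf y = m := by
        rw [hydef, orderOf_pow, ← hndef, Nat.gcd_eq_right hdvd]
      have hyC : y ∈ C := pow_mem hdC _
      have hyCen : y ∈ Subgroup.centralizer (R : Set G) := pow_mem hdCen _
      have hyN : y ∈ N := hCN hyC
      -- y centralizes Q
      have hyQ : ∀ q ∈ Q, q * y = y * q := by
        intro q hq
        have hqN : q ∈ N := myOpm_le N hq
        set x0 := q⁻¹ * (y⁻¹ * q * y) with hx0def
        have hx0Q : x0 ∈ Q := by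
          refine (opm p N).mul_mem ((opm p N).inv_mem hq) ?_
          have := myOpm_conj N ((N : Subgroup G).inv_mem hyN) hq
          simpa using this
        have hx0C : x0 ∈ C := by
          have h1 : q⁻¹ * y⁻¹ * q ∈ C := by
            have := hCconj q⁻¹ (inv_mem hqN) y⁻¹ (inv_mem hyC)
            simpa using this
          have h2 : x0 = (q⁻¹ * y⁻¹ * q) * y := by rw [hx0def]; group
          rw [h2]; exact C.mul_mem h1 hyC
        have hx0R : x0 ∈ R := hQC_le_R (Subgroup.mem_inf.mpr ⟨hx0Q, hx0C⟩)
        have hconjx : y⁻¹ * x0 * y = x0 := by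
          have h := Subgroup.mem_centralizer_iff.mp hyCen x0 hx0R
          calc y⁻¹ * x0 * y = y⁻¹ * (x0 * y) := by rw [mul_assoc]
            _ = y⁻¹ * (y * x0) := by rw [h]
            _ = x0 := by rw [inv_mul_cancel_left]
        have hx0k : ∀ k : ℕ, y⁻¹ * x0 ^ k * y = x0 ^ k := by
          intro k
          induction k with
          | zero => simp
          | succ k ih =>
            rw [pow_succ]
            calc y⁻¹ * (x0 ^ k * x0) * y = (y⁻¹ * x0 ^ k * y) * (y⁻¹ * x0 * y) := by group
              _ = x0 ^ k * x0 := by rw [ih, hconjx]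
        have hbase : y⁻¹ * q * y = q * x0 := by rw [hx0def]; group
        have key : ∀ k : ℕ, y⁻¹ ^ k * q * y ^ k = q * x0 ^ k := by
          intro k
          induction k with
          | zero => simp
          | succ k ih =>
            have hstep : y⁻¹ ^ (k + 1) * q * y ^ (k + 1)
                = y⁻¹ * (y⁻¹ ^ k * q * y ^ k) * y := by
              rw [pow_succ y⁻¹ k, pow_succ y k]; group
            rw [hstep, ih]
            calc y⁻¹ * (q * x0 ^ k) * y = (y⁻¹ * q * y) * (y⁻¹ * x0 ^ k * y) := by group
              _ = (q * x0) * x0 ^ k := by rw [hbase, hx0k]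
              _ = q * x0 ^ (k + 1) := by rw [pow_succ]; group
        have hym : y ^ m = 1 := by rw [← hyord]; exact pow_orderOf_eq_one y
        have hx0m : x0 ^ m = 1 := by
          have h := key m
          rw [inv_pow, hym] at h
          simp only [inv_one, one_mul, mul_one] at h
          exact left_eq_mul.mp h
        have hx0one : x0 = 1 := by
          obtain ⟨b, hb⟩ := (myOpm_isPGroup C (p := p)) ⟨x0, hx0R⟩
          have hbG : x0 ^ p ^ b = 1 := by
            have := congrArg (Subtype.val) hb
            simpa using this
          have hdvd1 : orderOf x0 ∣ p ^ b := orderOf_dvd_of_pow_eq_one hbG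
          have hdvd2 : orderOf x0 ∣ m := orderOf_dvd_of_pow_eq_one hx0m
          have hcop : Nat.Coprime (p ^ b) m := hm.pow_left b
          have hg1 := Nat.dvd_gcd hdvd1 hdvd2
          rw [Nat.Coprime] at hcop
          rw [hcop] at hg1
          exact orderOf_eq_one_iff.mp (Nat.dvd_one.mp hg1)
        have hyq : y⁻¹ * q * y = q := by
          have := hbase
          rw [hx0one, mul_one] at this
          exact this
        calc q * y = y * (y⁻¹ * (q * y)) := (mul_inv_cancel_left y (q * y)).symm
          _ = y * (y⁻¹ * q * y) := by rw [mul_assoc]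
          _ = y * q := by rw [hyq]
      -- hence y ∈ Q, and being a coprime-order element of a p-group, y = 1
      have hyQmem : y ∈ Q := hn y hyN hyQ
      have hy1 : y = 1 := by
        obtain ⟨b, hb⟩ := (myOpm_isPGroup N (p := p)) ⟨y, hyQmem⟩
        have hbG : y ^ p ^ b = 1 := by
          have := congrArg (Subtype.val) hb
          simpa using this
        have hdvd1 : orderOf y ∣ p ^ b := orderOf_dvd_of_pow_eq_one hbG
        rw [hyord] at hdvd1
        have hm1 : m = 1 := (hm.symm.pow_right b).eq_one_of_dvd hdvd1
        exact orderOf_eq_one_iff.mp (by rw [hyord, hm1])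
      refine ⟨a, ?_⟩
      apply Subtype.ext
      simpa using hydef ▸ hy1
    have hDR : D ≤ R := myLe_opm inf_le_left hDp hDconj
    exact hDR hgD
end
end

section
/- Let R be a p-centric subgroup of a finite group G and let Q be a p-subgroup of G containing R. Then Q is p-centric and Z(Q) ≤ Z(R). -/
open Subgroup

noncomputable section

theorem stmt4 {G : Type*} [Group G] [Finite G] (p : ℕ) [Fact p.Prime]
    (R Q : Subgroup G) (hR : IsPCentric p R) (hQ : IsPGroup p ↥Q) (hRQ : R ≤ Q) :
    IsPCentric p Q ∧
      Q ⊓ Subgroup.centralizer (Q : Set G) ≤ R ⊓ Subgroup.centralizer (R : Set G) := by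
  classical
  have hCQR : Subgroup.centralizer (Q : Set G) ≤ Subgroup.centralizer (R : Set G) :=
    Subgroup.centralizer_le (by exact_mod_cast hRQ)
  -- Q ∩ C(R) = R ∩ C(R)
  have hkey : Q ⊓ Subgroup.centralizer (R : Set G) = R ⊓ Subgroup.centralizer (R : Set G) :=
    hR.2.2 (Q ⊓ Subgroup.centralizer (R : Set G)) inf_le_right hQ.to_inf_left
      (inf_le_inf_right _ hRQ)
  have hZle : Q ⊓ Subgroup.centralizer (Q : Set G) ≤ R ⊓ Subgroup.centralizer (R : Set G) := by
    rw [← hkey]; exact inf_le_inf_left Q hCQR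
  refine ⟨⟨hQ, hQ.to_inf_left, ?_⟩, hZle⟩
  intro P hPC hP hQP
  -- every element of P commutes with every element of Q
  have hcomm : ∀ x ∈ P, ∀ h ∈ Q, x * h = h * x := by
    intro x hx h hh
    exact ((Subgroup.mem_centralizer_iff.mp (hPC hx)) h hh).symm
  set Z := R ⊓ Subgroup.centralizer (R : Set G) with hZ
  have hZQ : Z ≤ Q := le_trans inf_le_left hRQ
  have hPnorm : P ≤ Subgroup.normalizer (Z : Set G) := by
    intro x hx
    rw [Subgroup.mem_normalizer_iff]
    intro h
    constructor
    · intro hh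
      have hc : x * h * x⁻¹ = h := by
        rw [hcomm x hx h (hZQ hh)]; group
      rw [hc]; exact hh
    · intro hh
      have hc : x * (x * h * x⁻¹) = (x * h * x⁻¹) * x := hcomm x hx _ (hZQ hh)
      have : h = x * h * x⁻¹ := by
        calc h = x⁻¹ * ((x * h * x⁻¹) * x) := by group
          _ = x⁻¹ * (x * (x * h * x⁻¹)) := by rw [hc]
          _ = x * h * x⁻¹ := by group
      rw [this]; exact hh
  have hsup : IsPGroup p ↥(P ⊔ Z) :=
    IsPGroup.to_sup_of_normal_right' hP (hR.1.to_inf_left) hPnorm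
  have hsupC : P ⊔ Z ≤ Subgroup.centralizer (R : Set G) :=
    sup_le (le_trans hPC hCQR) inf_le_right
  have hPZ : P ⊔ Z = Z := hR.2.2 (P ⊔ Z) hsupC hsup le_sup_right
  have hPle : P ≤ Z := hPZ ▸ le_sup_left
  exact le_antisymm (le_inf (le_trans hPle hZQ) hPC) hQP
end
end

section
/- Let P be a nontrivial p-subgroup of G and Q a p-subgroup with P < Q such that Z(Q) contains a p-central element of G. Then Z(N_Q(P)) contains a p-central element of G; that is, N_Q(P) is a distinguished p-subgroup. -/
open Subgroup

noncomputable section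

theorem stmt7 {G : Type*} [Group G] [Finite G] (p : ℕ) [Fact p.Prime]
    (P Q : Subgroup G) (hPne : P ≠ ⊥) (hP : IsPGroup p ↥P) (hQ : IsPGroup p ↥Q) (hPQ : P < Q)
    (hz : ∃ x ∈ Q ⊓ Subgroup.centralizer (Q : Set G), IsPCentralElement p x) :
    ∃ x ∈ (Q ⊓ Subgroup.normalizer (P : Set G)) ⊓
        Subgroup.centralizer ((Q ⊓ Subgroup.normalizer (P : Set G) : Subgroup G) : Set G),
      IsPCentralElement p x := by
  obtain ⟨x, hx, hpc⟩ := hz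
  have hxQ : x ∈ Q := hx.1
  have hxC : x ∈ Subgroup.centralizer (Q : Set G) := hx.2
  have hxCP : x ∈ Subgroup.centralizer (P : Set G) :=
    Subgroup.centralizer_le (SetLike.coe_subset_coe.mpr hPQ.le) hxC
  have hxN : x ∈ Subgroup.normalizer (P : Set G) := by
    rw [Subgroup.mem_normalizer_iff]
    intro h
    constructor
    · intro hh
      have hc : h * x = x * h := hxCP h hh
      have : x * h * x⁻¹ = h := by
        rw [← hc]; group
      rw [this]; exact hh
    · intro hk
      have hc : (x * h * x⁻¹) * x = x * (x * h * x⁻¹) := hxCP _ hk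
      have h1 : x * h = x * (x * h * x⁻¹) := by
        simpa [mul_assoc] using hc
      have h2 := mul_left_cancel h1
      rw [h2]; exact hk
  refine ⟨x, ⟨⟨hxQ, hxN⟩, ?_⟩, hpc⟩
  exact Subgroup.centralizer_le (SetLike.coe_subset_coe.mpr inf_le_left) hxC
end
end

section
/- Let P be a nontrivial p-subgroup of G such that N_G(P) has characteristic p. Then O_p(N_G(P)) is p-centric in G and its center contains a p-central element of G. -/
open Subgroup

noncomputable section

open Pointwise

-- auxiliary lemmas

lemma normal_pGroup_le_sylow {G : Type*} [Group G] [Finite G] {p : ℕ} [Fact p.Prime]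
    (S : Sylow p G) {Q : Subgroup G} (hn : Q.Normal) (hQ : IsPGroup p ↥Q) :
    Q ≤ S := by
  obtain ⟨T, hQT⟩ := hQ.exists_le_sylow
  obtain ⟨g, hg⟩ := MulAction.exists_smul_eq G T S
  have h1 : MulAut.conj g • Q = Q := Subgroup.Normal.conj_smul_eq_self g Q
  calc Q = MulAut.conj g • Q := h1.symm
    _ ≤ MulAut.conj g • (T : Subgroup G) := by
        rw [Subgroup.pointwise_smul_def, Subgroup.pointwise_smul_def]
        exact Subgroup.map_mono hQT
    _ = S := by rw [← Sylow.coe_subgroup_smul, hg]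

lemma pCore_isPGroup {G : Type*} [Group G] [Finite G] {p : ℕ} [Fact p.Prime] :
    IsPGroup p ↥(pCore p G) := by
  obtain ⟨S⟩ : Nonempty (Sylow p G) := inferInstance
  refine S.2.to_le ?_
  refine iSup_le fun Q => iSup_le fun hQ => normal_pGroup_le_sylow S hQ.1 hQ.2

lemma centralizer_le_normalizer' {G : Type*} [Group G] (P : Subgroup G) :
    Subgroup.centralizer (P : Set G) ≤ Subgroup.normalizer (P : Set G) := by
  intro x hx
  rw [Subgroup.mem_normalizer_iff]
  intro h
  constructor
  · intro hh
    have := Subgroup.mem_centralizer_iff.mp hx h hh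
    have : x * h * x⁻¹ = h := by
      rw [← this]; group
    rw [this]; exact hh
  · intro hh
    have hx' := Subgroup.mem_centralizer_iff.mp hx _ hh
    have h1 : (x * h * x⁻¹) * x = x * h := by group
    have h2 : x * h = x * (x * h * x⁻¹) := h1.symm.trans hx'
    have h3 : h = x * h * x⁻¹ := mul_left_cancel h2
    rw [h3]; exact hh

theorem stmt8 {G : Type*} [Group G] [Finite G] (p : ℕ) [Fact p.Prime]
    (P : Subgroup G) (hPne : P ≠ ⊥) (hP : IsPGroup p ↥P)
    (hN : CharacteristicP p ↥(Subgroup.normalizer (P : Set G)))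
    (R : Subgroup G) (hR : R = (pCore p ↥(Subgroup.normalizer (P : Set G))).map (Subgroup.normalizer (P : Set G)).subtype) :
    IsPCentric p R ∧
      ∃ x ∈ R ⊓ Subgroup.centralizer (R : Set G), IsPCentralElement p x := by
  set N := Subgroup.normalizer (P : Set G) with hNdef
  -- P ≤ R
  have hPmem : P.subgroupOf N ∈ {Q : Subgroup ↥N | Q.Normal ∧ IsPGroup p ↥Q} :=
    ⟨Subgroup.normal_in_normalizer, hP.comap_subtype⟩
  have hPK : P.subgroupOf N ≤ pCore p ↥N :=
    le_iSup₂ (f := fun (Q : Subgroup ↥N) (_ : Q ∈ _) => Q) _ hPmem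
  have hPle : P ≤ R := by
    rw [hR]
    calc P = P ⊓ N := (inf_eq_left.mpr Subgroup.le_normalizer).symm
      _ = (P.subgroupOf N).map N.subtype := (Subgroup.subgroupOf_map_subtype P N).symm
      _ ≤ _ := Subgroup.map_mono hPK
  -- R is a p-group
  have hRp : IsPGroup p ↥R := by
    rw [hR]; exact pCore_isPGroup.map _
  -- centralizer R ≤ R
  have hCle : Subgroup.centralizer (R : Set G) ≤ R := by
    intro x hx
    have hxN : x ∈ N := centralizer_le_normalizer' P
      (Subgroup.centralizer_le (by exact_mod_cast hPle) hx)
    have hxC : (⟨x, hxN⟩ : ↥N) ∈ Subgroup.centralizer ((pCore p ↥N : Subgroup ↥N) : Set ↥N) := by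
      rw [Subgroup.mem_centralizer_iff]
      intro h hh
      have hhR : (h : G) ∈ R := by
        rw [hR]; exact ⟨h, hh, rfl⟩
      have := Subgroup.mem_centralizer_iff.mp hx (h : G) hhR
      exact Subtype.ext this
    have := hN hxC
    rw [hR]
    exact ⟨⟨x, hxN⟩, this, rfl⟩
  have hRC : R ⊓ Subgroup.centralizer (R : Set G) = Subgroup.centralizer (R : Set G) :=
    inf_eq_right.mpr hCle
  constructor
  · refine ⟨hRp, hRp.to_le inf_le_left, ?_⟩
    intro Q hQc _ hle
    exact le_antisymm (le_inf (hQc.trans hCle) hQc) hle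
  · -- p-central element
    obtain ⟨S, hRS⟩ := hRp.exists_le_sylow
    have hRne : R ≠ ⊥ := fun h => hPne (le_bot_iff.mp (h ▸ hPle))
    have hSne : (S : Subgroup G) ≠ ⊥ := fun h => hRne (le_bot_iff.mp (h ▸ hRS))
    haveI : Nontrivial ↥(S : Subgroup G) := (Subgroup.nontrivial_iff_ne_bot _).mpr hSne
    haveI : Nontrivial ↥(Subgroup.center ↥(S : Subgroup G)) := S.2.center_nontrivial
    obtain ⟨z, hz1⟩ := exists_ne (1 : ↥(Subgroup.center ↥(S : Subgroup G)))
    obtain ⟨m, hm⟩ := IsPGroup.iff_orderOf.mp S.2 (z : ↥(S : Subgroup G))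
    have hm0 : m ≠ 0 := by
      rintro rfl
      rw [pow_zero, orderOf_eq_one_iff] at hm
      exact hz1 (Subtype.ext hm)
    set x : ↥(Subgroup.center ↥(S : Subgroup G)) := z ^ (p ^ (m - 1)) with hxdef
    have hp := (Fact.out : p.Prime)
    have hox : orderOf ((x : ↥(S : Subgroup G)) : G) = p := by
      rw [Subgroup.orderOf_coe, hxdef]
      push_cast
      rw [orderOf_pow' _ (pow_ne_zero _ hp.ne_zero), hm,
        Nat.gcd_eq_right (pow_dvd_pow p (Nat.sub_le m 1)),
        Nat.pow_div (Nat.sub_le m 1) hp.pos]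
      rw [Nat.sub_sub_self (Nat.one_le_iff_ne_zero.mpr hm0), pow_one]
    have hxcomm : ∀ y ∈ (S : Subgroup G), ((x : ↥(S : Subgroup G)) : G) * y
        = y * ((x : ↥(S : Subgroup G)) : G) := by
      intro y hy
      have := (Subgroup.mem_center_iff.mp x.2) ⟨y, hy⟩
      exact (congrArg Subtype.val this).symm
    have hxcent : ((x : ↥(S : Subgroup G)) : G) ∈ Subgroup.centralizer (R : Set G) := by
      rw [Subgroup.mem_centralizer_iff]
      intro h hh
      exact (hxcomm h (hRS hh)).symm
    refine ⟨_, ⟨hCle hxcent, hxcent⟩, hox, S, (x : ↥(S : Subgroup G)).2, hxcomm⟩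
end
end

section
/- If G has local characteristic p, then the collection of p-centric p-radical subgroups of G equals the collection of all nontrivial p-radical subgroups of G. -/
open Subgroup

noncomputable section

theorem stmt10 {G : Type*} [Group G] [Finite G] (p : ℕ) [Fact p.Prime]
    (hG : LocalCharacteristicP p G) :
    {R : Subgroup G | R ≠ ⊥ ∧ IsRadicalPSubgroup p R ∧ IsPCentric p R} =
      {R : Subgroup G | R ≠ ⊥ ∧ IsRadicalPSubgroup p R} := by
  ext R
  simp only [Set.mem_setOf_eq]
  refine ⟨fun h => ⟨h.1, h.2.1⟩, fun ⟨hbot, hrad⟩ => ⟨hbot, hrad, ?_⟩⟩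
  -- centralizer lies in the normalizer
  have hCN : Subgroup.centralizer (R : Set G) ≤ (Subgroup.normalizer (R : Set G)) := by
    intro x hx
    rw [Subgroup.mem_normalizer_iff]
    intro h
    constructor
    · intro hh
      have hc := Subgroup.mem_centralizer_iff.mp hx h hh
      have : x * h * x⁻¹ = h := by rw [← hc]; group
      rw [this]; exact hh
    · intro hh
      have hc := Subgroup.mem_centralizer_iff.mp hx _ hh
      have hc' : x * h = x * (x * h * x⁻¹) := by rw [← hc]; group
      have : h = x * h * x⁻¹ := mul_left_cancel hc'
      rw [this]; exact hh
  -- key: C_G(R) ≤ R, using local characteristic p and radicality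
  have hC : Subgroup.centralizer (R : Set G) ≤ R := by
    have hchar := hG R hbot hrad.1
    intro x hx
    have hmap := hrad.2
    have hxmem : (⟨x, hCN hx⟩ : (Subgroup.normalizer (R : Set G))) ∈
        Subgroup.centralizer ((pCore p ↥(Subgroup.normalizer (R : Set G)) : Subgroup ↥(Subgroup.normalizer (R : Set G))) :
          Set ↥(Subgroup.normalizer (R : Set G))) := by
      rw [Subgroup.mem_centralizer_iff]
      intro y hy
      have hyR : (y : G) ∈ R := by
        have hm : (y : G) ∈ (pCore p ↥(Subgroup.normalizer (R : Set G))).map (Subgroup.normalizer (R : Set G)).subtype :=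
          ⟨y, hy, rfl⟩
        rwa [hmap] at hm
      have hc := Subgroup.mem_centralizer_iff.mp hx _ hyR
      exact Subtype.ext hc
    have hxcore := hchar hxmem
    have hm : x ∈ (pCore p ↥(Subgroup.normalizer (R : Set G))).map (Subgroup.normalizer (R : Set G)).subtype :=
      ⟨_, hxcore, rfl⟩
    rwa [hmap] at hm
  refine ⟨hrad.1, hrad.1.to_le inf_le_left, fun Q hQC _ hle => ?_⟩
  exact le_antisymm (le_inf (hQC.trans hC) hQC) hle
end
end

section
/- Let N = N_G(T) = (O_C × H):S' be a finite group where H is normal in N with complement D = O_C:S' containing O_C = O_p(TC_G(T)), T ≤ O_C, and elements of H commute with elements of O_C. Then D·C_G(D) = D·C_H(S'). -/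
open Subgroup

noncomputable section

lemma cent_le_norm {G : Type*} [Group G] (T : Subgroup G) :
    Subgroup.centralizer (T : Set G) ≤ (Subgroup.normalizer (T : Set G)) := by
  intro g hg
  rw [Subgroup.mem_centralizer_iff] at hg
  rw [Subgroup.mem_normalizer_iff]
  intro t
  constructor
  · intro ht
    have h1 := hg t ht
    have : g * t * g⁻¹ = t := by rw [← h1]; group
    rwa [this]
  · intro ht
    have h1 := hg _ ht
    have h2 : g * t = g * (g * t * g⁻¹) := by rw [← h1]; group
    have h3 := mul_left_cancel h2
    rw [h3]; exact ht


theorem stmt18 {G : Type*} [Group G] [Finite G] (p : ℕ) [Fact p.Prime]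
    (T : Subgroup G) (hT : IsPGroup p ↥T)
    (H D S' OC : Subgroup G)
    (hOC : OC = (pCore p ↥(T ⊔ Subgroup.centralizer (T : Set G))).map
      (T ⊔ Subgroup.centralizer (T : Set G)).subtype)
    (hTOC : T ≤ OC)
    (hHN : H ≤ Subgroup.normalizer (T : Set G))
    (hHnormal : (H.subgroupOf (Subgroup.normalizer (T : Set G))).Normal)
    (hDN : D ≤ Subgroup.normalizer (T : Set G))
    (hcomp : (H.subgroupOf (Subgroup.normalizer (T : Set G))).IsComplement' (D.subgroupOf (Subgroup.normalizer (T : Set G))))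
    (hOCD : OC ≤ D) (hS'D : S' ≤ D)
    (hsplit : (OC.subgroupOf D).IsComplement' (S'.subgroupOf D))
    (hD : IsPGroup p ↥D)
    (hcomm : ∀ h ∈ H, ∀ x ∈ OC, h * x = x * h) :
    D ⊔ Subgroup.centralizer (D : Set G) =
      D ⊔ (H ⊓ Subgroup.centralizer (S' : Set G)) := by
  have hTD : T ≤ D := hTOC.trans hOCD
  apply le_antisymm
  · refine sup_le le_sup_left ?_
    intro c hc
    have hcT : c ∈ Subgroup.centralizer (T : Set G) :=
      Subgroup.centralizer_le (fun x hx => hTD hx) hc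
    have hcN : c ∈ (Subgroup.normalizer (T : Set G)) := cent_le_norm T hcT
    rw [mem_centralizer_iff] at hc
    obtain ⟨⟨⟨h, hh⟩, ⟨d, hd⟩⟩, heq, -⟩ := hcomp.existsUnique (⟨c, hcN⟩ : (Subgroup.normalizer (T : Set G)))
    -- h d : ↥(Subgroup.normalizer (T : Set G)), hh : h ∈ H.subgroupOf _, hd : d ∈ D.subgroupOf _
    have hhH : (h : G) ∈ H := hh
    have hdD : (d : G) ∈ D := hd
    have heqG : (h : G) * d = c := congrArg Subtype.val heq
    have hhC : (h : G) ∈ Subgroup.centralizer (S' : Set G) := by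
      rw [mem_centralizer_iff]
      intro s hs
      have hsD : s ∈ D := hS'D hs
      have hsN : s ∈ (Subgroup.normalizer (T : Set G)) := hDN hsD
      set sN : (Subgroup.normalizer (T : Set G)) := ⟨s, hsN⟩
      -- commutator k := h * s * h⁻¹ * s⁻¹ lies in H
      have hconj : sN * h⁻¹ * sN⁻¹ ∈ H.subgroupOf (Subgroup.normalizer (T : Set G)) :=
        hHnormal.conj_mem h⁻¹ (inv_mem hh) sN
      have hkH : (h : G) * (s * (h : G)⁻¹ * s⁻¹) ∈ H := by
        have : ((sN * h⁻¹ * sN⁻¹ : (Subgroup.normalizer (T : Set G))) : G) ∈ H := hconj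
        have hmul := H.mul_mem hhH this
        simpa [mul_assoc] using hmul
      -- the commutator also lies in D
      have hkD : (h : G) * (s * (h : G)⁻¹ * s⁻¹) ∈ D := by
        have hhc : (h : G) = c * (d : G)⁻¹ := by
          rw [← heqG]; group
        have hcd : ∀ x ∈ D, c * x * c⁻¹ = x := fun x hx => by
          have := hc x hx; rw [← this]; group
        have hin : (d : G)⁻¹ * s * d ∈ D := D.mul_mem (D.mul_mem (D.inv_mem hdD) hsD) hdD
        have : (h : G) * (s * (h : G)⁻¹ * s⁻¹) = ((d : G)⁻¹ * s * d) * s⁻¹ := by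
          rw [hhc]
          have := hcd _ hin
          calc c * (d : G)⁻¹ * (s * (c * (d:G)⁻¹)⁻¹ * s⁻¹)
              = (c * ((d:G)⁻¹ * s * d) * c⁻¹) * s⁻¹ := by group
            _ = ((d : G)⁻¹ * s * d) * s⁻¹ := by rw [this]
        rw [this]
        exact D.mul_mem hin (D.inv_mem hsD)
      -- H ∩ D is trivial inside N
      have hkN : (h : G) * (s * (h : G)⁻¹ * s⁻¹) ∈ (Subgroup.normalizer (T : Set G)) := hHN hkH
      have hk1 : (h : G) * (s * (h : G)⁻¹ * s⁻¹) = 1 := by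
        have hdis := hcomp.disjoint
        have hmem : (⟨_, hkN⟩ : (Subgroup.normalizer (T : Set G))) ∈
            (H.subgroupOf (Subgroup.normalizer (T : Set G))) ⊓ (D.subgroupOf (Subgroup.normalizer (T : Set G))) := ⟨hkH, hkD⟩
        rw [hdis.eq_bot] at hmem
        exact congrArg Subtype.val hmem
      have h2 : (h : G) * s = s * (h : G) := by
        have := hk1
        rw [show (h : G) * (s * (h : G)⁻¹ * s⁻¹)
            = ((h : G) * s) * (s * (h : G))⁻¹ by group] at this
        exact mul_inv_eq_one.mp this
      exact h2.symm
    have : c ∈ (H ⊓ Subgroup.centralizer (S' : Set G)) ⊔ D := by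
      rw [← heqG]
      exact mul_mem
        ((le_sup_left : H ⊓ Subgroup.centralizer (S' : Set G) ≤ _) ⟨hhH, hhC⟩)
        ((le_sup_right : D ≤ _) hdD)
    rwa [sup_comm] at this
  · refine sup_le le_sup_left ?_
    refine le_trans ?_ le_sup_right
    intro x hx
    have hxH : x ∈ H := hx.1
    have hxC := Subgroup.mem_centralizer_iff.mp hx.2
    rw [mem_centralizer_iff]
    intro d hd
    obtain ⟨⟨⟨o, ho⟩, ⟨s, hs⟩⟩, heq, -⟩ := hsplit.existsUnique (⟨d, hd⟩ : D)
    have hoO : (o : G) ∈ OC := ho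
    have hsS : (s : G) ∈ S' := hs
    have heqG : (o : G) * s = d := congrArg Subtype.val heq
    have h1 := hcomm x hxH (o : G) hoO
    have h2 := hxC (s : G) hsS
    rw [← heqG, mul_assoc, h2, ← mul_assoc, ← h1, mul_assoc]
end
end
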